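/- Let τ be a Salem number and let z₁ and z₂ be two distinct nonreal conjugates of τ. Then the straight line in the complex plane passing through z₁ and z₂ does not pass through the point τ (regarded as a point on the real axis). -/

import Mathlib

/-- `z : ℂ` is a conjugate of the real algebraic number `τ`:
it is a complex root of the minimal polynomial of `τ` over `ℚ`. -/
def IsConjugateOf (z : ℂ) (τ : ℝ) : Prop :=
  Polynomial.aeval z (minpoly ℚ τ) = 0

/-- A Salem number: a real algebraic integer `τ > 1`, of degree at least 4,
conjugate to `τ⁻¹`, all of whose conjugates other than `τ` and `τ⁻¹`
have modulus 1. -/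
def IsSalem (τ : ℝ) : Prop :=
  1 < τ ∧ IsIntegral ℤ τ ∧ 4 ≤ (minpoly ℚ τ).natDegree ∧
    IsConjugateOf ((τ : ℂ))⁻¹ τ ∧
    ∀ z : ℂ, IsConjugateOf z τ → z ≠ (τ : ℂ) → z ≠ ((τ : ℂ))⁻¹ → ‖z‖ = 1

open Polynomial IntermediateField

private lemma salem_ineq (y₀ y₁ y₂ : ℝ) (h₀ : |y₀| < 2) (h₁ : |y₁| < 2) (h₂ : |y₂| < 2) :
    y₀ * (y₁ + y₂) - y₁ * y₂ ≠ 4 := by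
  rw [abs_lt] at h₀ h₁ h₂
  intro h
  nlinarith [mul_pos (mul_pos (show (0:ℝ) < 2 - y₀ by linarith)
      (show (0:ℝ) < 2 + y₁ by linarith)) (show (0:ℝ) < 2 + y₂ by linarith),
    mul_pos (mul_pos (show (0:ℝ) < 2 + y₀ by linarith)
      (show (0:ℝ) < 2 - y₁ by linarith)) (show (0:ℝ) < 2 - y₂ by linarith)]

private lemma minpoly_coe (L : IntermediateField ℚ ℂ) (x : L) :
    minpoly ℚ (x : ℂ) = minpoly ℚ x := by
  have h := minpoly.algebraMap_eq (A := ℚ) (algebraMap L ℂ).injective x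
  rwa [IntermediateField.algebraMap_apply] at h

private lemma exists_embedding (L : IntermediateField ℚ ℂ) [FiniteDimensional ℚ L]
    (x : L) (y : ℂ) (hy : Polynomial.aeval y (minpoly ℚ (x : ℂ)) = 0) :
    ∃ ρ : L →+* ℂ, ρ x = y := by
  haveI : CharZero L := charZero_of_injective_algebraMap (algebraMap ℚ L).injective
  haveI : NumberField L := ⟨⟩
  have hx : IsIntegral ℚ x := IsIntegral.of_finite ℚ x
  have hy' : y ∈ (minpoly ℚ x).rootSet ℂ := by
    rw [Polynomial.mem_rootSet]
    exact ⟨minpoly.ne_zero hx, by rwa [minpoly_coe L x] at hy⟩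
  rw [← NumberField.Embeddings.range_eval_eq_rootSet_minpoly L ℂ x] at hy'
  exact hy'

private lemma embed_root (L : IntermediateField ℚ ℂ) (ρ : L →+* ℂ) (Q : Polynomial ℚ)
    (x : L) (hx : Polynomial.aeval (x : ℂ) Q = 0) : Polynomial.aeval (ρ x) Q = 0 := by
  have hx' : Polynomial.aeval x Q = 0 := by
    apply (algebraMap L ℂ).injective
    have h1 : algebraMap L ℂ (Polynomial.aeval x Q) = Polynomial.aeval (algebraMap L ℂ x) Q :=
      (Polynomial.aeval_algebraMap_apply ℂ x Q).symm
    rw [map_zero, h1]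
    exact hx
  have h2 : Polynomial.aeval (ρ.toRatAlgHom x) Q = ρ.toRatAlgHom (Polynomial.aeval x Q) :=
    Polynomial.aeval_algHom_apply ρ.toRatAlgHom x Q
  simpa [hx'] using h2

private lemma eq_of_rat_root {α : ℝ} (hα : IsIntegral ℚ α) {q : ℚ}
    (h : Polynomial.aeval ((q : ℝ)) (minpoly ℚ α) = 0) : α = q := by
  have hdvd : Polynomial.X - Polynomial.C q ∣ minpoly ℚ α := by
    have h2 : minpoly ℚ ((q : ℝ)) ∣ minpoly ℚ α := minpoly.dvd ℚ _ h
    rwa [show ((q:ℝ)) = algebraMap ℚ ℝ q from rfl, minpoly.eq_X_sub_C] at h2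
  obtain ⟨c, hc⟩ := hdvd
  rcases (minpoly.irreducible hα).isUnit_or_isUnit hc with h1 | h2
  · exact absurd h1 (Polynomial.not_isUnit_X_sub_C q)
  · obtain ⟨r, hr, hrc⟩ := Polynomial.isUnit_iff.mp h2
    have hmon : (minpoly ℚ α).leadingCoeff = 1 := minpoly.monic hα
    rw [hc, ← hrc, Polynomial.leadingCoeff_mul, Polynomial.leadingCoeff_X_sub_C,
      Polynomial.leadingCoeff_C, one_mul] at hmon
    have hQ : minpoly ℚ α = Polynomial.X - Polynomial.C q := by
      rw [hc, ← hrc, hmon, map_one, mul_one]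
    have ha := minpoly.aeval ℚ α
    rw [hQ] at ha
    simp only [map_sub, Polynomial.aeval_X, Polynomial.aeval_C] at ha
    have : α - (q:ℝ) = 0 := by simpa using ha
    linarith

set_option maxHeartbeats 4000000 in
theorem line_through_nonreal_conjugates_misses_salem (τ : ℝ) (hτ : IsSalem τ)
    (z₁ z₂ : ℂ) (h₁ : IsConjugateOf z₁ τ) (h₂ : IsConjugateOf z₂ τ)
    (h₁im : z₁.im ≠ 0) (h₂im : z₂.im ≠ 0) (hne : z₁ ≠ z₂) :
    ¬ Collinear ℝ ({z₁, z₂, (τ : ℂ)} : Set ℂ) := by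
  intro hcol
  obtain ⟨ht1, hint, hdeg, hinv, habs⟩ := hτ
  set τc : ℂ := (τ : ℂ) with hτcdef
  have hτpos : (0:ℝ) < τ := lt_trans one_pos ht1
  have hτne : τ ≠ 0 := ne_of_gt hτpos
  have hτcne : τc ≠ 0 := by simp [hτcdef, hτne]
  have hτcim : τc.im = 0 := by simp [hτcdef]
  have hτinvim : (τc⁻¹).im = 0 := by
    simp [hτcdef, ← Complex.ofReal_inv]
  -- the zᵢ are on the unit circle
  have habs1 : ‖z₁‖ = 1 := by
    refine habs z₁ h₁ (fun h => ?_) (fun h => ?_)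
    · exact h₁im (by rw [h, hτcim])
    · exact h₁im (by rw [h, hτinvim])
  have habs2 : ‖z₂‖ = 1 := by
    refine habs z₂ h₂ (fun h => ?_) (fun h => ?_)
    · exact h₂im (by rw [h, hτcim])
    · exact h₂im (by rw [h, hτinvim])
  have hz₁ne : z₁ ≠ 0 := by intro h; rw [h] at habs1; simp at habs1
  have hz₂ne : z₂ ≠ 0 := by intro h; rw [h] at habs2; simp at habs2
  have hz₁c : z₁⁻¹ = (starRingEnd ℂ) z₁ := Complex.inv_eq_conj (by assumption)
  have hz₂c : z₂⁻¹ = (starRingEnd ℂ) z₂ := Complex.inv_eq_conj (by assumption)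
  have hz₁u : z₁ * (starRingEnd ℂ) z₁ = 1 := by
    rw [Complex.mul_conj, Complex.normSq_eq_norm_sq, habs1]; norm_num
  have hz₂u : z₂ * (starRingEnd ℂ) z₂ = 1 := by
    rw [Complex.mul_conj, Complex.normSq_eq_norm_sq, habs2]; norm_num
  have hz₁τ : z₁ ≠ τc := fun h => h₁im (by rw [h, hτcim])
  have hz₂τ : z₂ ≠ τc := fun h => h₂im (by rw [h, hτcim])
  -- extract the collinearity parameter r
  have hmem : τc ∈ ({z₁, z₂, τc} : Set ℂ) := by simp
  rw [collinear_iff_of_mem hmem] at hcol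
  obtain ⟨v, hv⟩ := hcol
  obtain ⟨c₁, hc₁⟩ := hv z₁ (by simp)
  obtain ⟨c₂, hc₂⟩ := hv z₂ (by simp)
  have hz₁v : z₁ - τc = c₁ • v := by rw [hc₁]; simp
  have hz₂v : z₂ - τc = c₂ • v := by rw [hc₂]; simp
  have hc₁0 : c₁ ≠ 0 := by
    intro h
    rw [h, zero_smul] at hz₁v
    exact hz₁τ (by linear_combination hz₁v)
  set r : ℝ := c₂ / c₁ with hrdef
  have hr : z₂ - τc = (r : ℂ) * (z₁ - τc) := by
    have h1 : (r : ℂ) * (z₁ - τc) = r • (z₁ - τc) := (Complex.real_smul).symm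
    rw [h1, hz₁v, hz₂v, smul_smul, hrdef, div_mul_cancel₀ _ hc₁0]
  have hr1 : r ≠ 1 := by
    intro h
    rw [h] at hr
    push_cast at hr
    exact hne (by linear_combination -hr)
  have hr0 : r ≠ 0 := by
    intro h
    rw [h] at hr
    push_cast at hr
    exact hz₂τ (by linear_combination hr)
  -- rule out the vertical-line case: z₂.re = z₁.re
  have hreab : |z₁.re| ≤ 1 := by rw [← habs1]; exact Complex.abs_re_le_norm z₁
  have hRe : z₂.re ≠ z₁.re := by
    intro hRe
    have hre : z₂.re - τ = r * (z₁.re - τ) := by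
      have := congrArg Complex.re hr
      simpa [hτcdef, Complex.sub_re, Complex.mul_re, Complex.ofReal_re] using this
    rw [hRe] at hre
    have h2 : (1 - r) * (z₁.re - τ) = 0 := by linear_combination hre
    rcases mul_eq_zero.mp h2 with h3 | h3
    · exact hr1 (by linarith)
    · have : z₁.re = τ := by linarith
      rw [this] at hreab
      have := abs_le.mp hreab
      linarith [this.2]
  -- the key algebraic identity from collinearity
  have key : ∀ (a b : ℂ) (ρ : ℝ), a * (starRingEnd ℂ) a = 1 → b * (starRingEnd ℂ) b = 1 →
      b - τc = (ρ:ℂ) * (a - τc) → ρ ≠ 1 →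
      (ρ:ℂ) * (1 - τc * (a + (starRingEnd ℂ) a) + τc^2) = τc^2 - 1 := by
    intro a b ρ ha hb hab hρ
    have hab' : (starRingEnd ℂ) b - τc = (ρ:ℂ) * ((starRingEnd ℂ) a - τc) := by
      have h := congrArg (starRingEnd ℂ) hab
      simpa [map_sub, map_mul, Complex.conj_ofReal, hτcdef] using h
    have hfact : ((ρ:ℂ) - 1) *
        ((ρ:ℂ) * (1 - τc * (a + (starRingEnd ℂ) a) + τc^2) - (τc^2 - 1)) = 0 := by
      linear_combination hb - (ρ:ℂ)^2 * ha
        - (τc + (ρ:ℂ) * ((starRingEnd ℂ) a - τc)) * hab - b * hab'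
    have hρ1 : (ρ:ℂ) - 1 ≠ 0 := by
      intro h
      exact hρ (by exact_mod_cast sub_eq_zero.mp h)
    have := mul_eq_zero.mp hfact
    rcases this with h | h
    · exact absurd h hρ1
    · linear_combination h
  have hrinv : z₁ - τc = ((r⁻¹ : ℝ):ℂ) * (z₂ - τc) := by
    rw [hr]
    push_cast
    rw [← mul_assoc, inv_mul_cancel₀ (by exact_mod_cast hr0 : (r:ℂ) ≠ 0), one_mul]
  have k₁ := key z₁ z₂ r hz₁u hz₂u hr hr1
  have k₂ := key z₂ z₁ r⁻¹ hz₂u hz₁u hrinv (fun h => hr1 (inv_eq_one.mp h))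
  set x₁ : ℝ := 2 * z₁.re with hx₁def
  set x₂ : ℝ := 2 * z₂.re with hx₂def
  have hcx₁ : z₁ + (starRingEnd ℂ) z₁ = (x₁ : ℂ) := by
    rw [Complex.add_conj]
  have hcx₂ : z₂ + (starRingEnd ℂ) z₂ = (x₂ : ℂ) := by
    rw [Complex.add_conj]
  rw [hcx₁] at k₁
  rw [hcx₂] at k₂
  -- product relation
  have hrC : (r:ℂ) ≠ 0 := by exact_mod_cast hr0
  have hk₂' : (1 - τc * (x₂:ℂ) + τc^2) = (r:ℂ) * (τc^2 - 1) := by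
    have h := congrArg (fun w => (r:ℂ) * w) k₂
    rw [Complex.ofReal_inv, ← mul_assoc, mul_inv_cancel₀ hrC, one_mul] at h
    exact h
  have hprodC : (1 - τc * (x₁:ℂ) + τc^2) * (1 - τc * (x₂:ℂ) + τc^2) = (τc^2 - 1)^2 := by
    rw [hk₂']
    calc (1 - τc * (x₁:ℂ) + τc^2) * ((r:ℂ) * (τc^2 - 1))
        = ((r:ℂ) * (1 - τc * (x₁:ℂ) + τc^2)) * (τc^2 - 1) := by ring
      _ = (τc^2 - 1)^2 := by rw [k₁]; ring
  have hprod : (1 - τ * x₁ + τ^2) * (1 - τ * x₂ + τ^2) = (τ^2 - 1)^2 := by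
    have h := hprodC
    rw [hτcdef] at h
    exact_mod_cast h
  obtain ⟨t, htdef⟩ : ∃ t : ℝ, t = τ + τ⁻¹ := ⟨_, rfl⟩
  have hτt : τ * t = τ^2 + 1 := by
    rw [htdef, mul_add, mul_inv_cancel₀ hτne]; ring
  have htrel : t * (x₁ + x₂) - x₁ * x₂ = 4 := by
    have h2 : τ^2 * (t * (x₁ + x₂) - x₁ * x₂ - 4) = 0 := by
      linear_combination (-1 : ℝ) * hprod + (τ*(x₁+x₂) + τ*t - τ^2 - 1) * hτt - (τ*t - τ^2 - 1) * hτt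
    have h3 := mul_eq_zero.mp h2
    rcases h3 with h3 | h3
    · exact absurd h3 (pow_ne_zero 2 hτne)
    · linarith
  have ht2 : 2 < t := by
    have h6 : t - 2 = (τ-1)^2 * τ⁻¹ := by
      rw [htdef]; field_simp; ring
    nlinarith [mul_pos (pow_pos (show (0:ℝ) < τ - 1 by linarith) 2) (inv_pos.mpr hτpos)]
  -- bounds on x₁, x₂
  have hnsq₁ : z₁.re^2 + z₁.im^2 = 1 := by
    have h1 : Complex.normSq z₁ = 1 := by rw [Complex.normSq_eq_norm_sq, habs1]; norm_num
    rw [Complex.normSq_apply] at h1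
    linear_combination h1
  have hnsq₂ : z₂.re^2 + z₂.im^2 = 1 := by
    have h1 : Complex.normSq z₂ = 1 := by rw [Complex.normSq_eq_norm_sq, habs2]; norm_num
    rw [Complex.normSq_apply] at h1
    linear_combination h1
  have hx₁lt : |x₁| < 2 := by
    rw [abs_lt, hx₁def]
    constructor <;> nlinarith [mul_self_pos.mpr h₁im, hnsq₁]
  have hx₂lt : |x₂| < 2 := by
    rw [abs_lt, hx₂def]
    constructor <;> nlinarith [mul_self_pos.mpr h₂im, hnsq₂]
  have hx12 : x₁ ≠ x₂ := by
    intro h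
    rw [hx₁def, hx₂def] at h
    exact hRe (by linarith)
  -- number-theoretic setup
  have hτalg : IsIntegral ℚ τ := hint.tower_top
  have haevτc : Polynomial.aeval τc (minpoly ℚ τ) = 0 := by
    rw [hτcdef, show ((τ:ℝ):ℂ) = algebraMap ℝ ℂ τ from rfl, Polynomial.aeval_algebraMap_apply,
      minpoly.aeval, map_zero]
  have hτcint : IsIntegral ℚ τc :=
    ⟨minpoly ℚ τ, minpoly.monic hτalg, by rw [← Polynomial.aeval_def]; exact haevτc⟩
  have hPτc : minpoly ℚ τc = minpoly ℚ τ := by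
    have := minpoly.algebraMap_eq (A := ℚ) (algebraMap ℝ ℂ).injective τ
    simpa [hτcdef] using this
  set tc : ℂ := (t : ℂ) with htcdef
  have htc : tc = τc + τc⁻¹ := by
    rw [htcdef, htdef, hτcdef]
    push_cast
    ring
  have hQtc : minpoly ℚ tc = minpoly ℚ t := by
    have := minpoly.algebraMap_eq (A := ℚ) (algebraMap ℝ ℂ).injective t
    simpa [htcdef] using this
  set Q : Polynomial ℚ := minpoly ℚ t with hQdef
  -- K = ℚ(τc)
  set K : IntermediateField ℚ ℂ := ℚ⟮τc⟯ with hKdef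
  haveI : FiniteDimensional ℚ K := IntermediateField.adjoin.finiteDimensional hτcint
  set τK : K := IntermediateField.AdjoinSimple.gen ℚ τc with hτKdef
  have hτKval : (τK : ℂ) = τc := rfl
  set tK : K := τK + τK⁻¹ with htKdef
  have htKval : (tK : ℂ) = tc := by
    rw [htKdef, htc]
    push_cast
    rfl
  have htint : IsIntegral ℚ t := by
    have h1 : IsIntegral ℚ tK := IsIntegral.of_finite ℚ tK
    have h2 : IsIntegral ℚ tc := ⟨minpoly ℚ tK, minpoly.monic h1, by
      rw [← Polynomial.aeval_def, ← htKval, show ((tK:ℂ)) = algebraMap K ℂ tK from rfl,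
        Polynomial.aeval_algebraMap_apply, minpoly.aeval, map_zero]⟩
    rwa [htcdef, show ((t:ℝ):ℂ) = algebraMap ℝ ℂ t from rfl,
      isIntegral_algebraMap_iff (algebraMap ℝ ℂ).injective] at h2
  have htne0 : t ≠ 0 := by linarith
  have hQne : Q ≠ 0 := minpoly.ne_zero htint
  have haevaltcQ : Polynomial.aeval tc Q = 0 := by
    rw [← hQtc]
    exact minpoly.aeval ℚ tc
  have haevaltKQ : Polynomial.aeval ((tK : ℂ)) Q = 0 := by rwa [htKval]
  have hminτK : minpoly ℚ ((τK : ℂ)) = minpoly ℚ τ := hPτc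
  have hmintK : minpoly ℚ ((tK : ℂ)) = Q := by rw [htKval]; exact hQtc
  -- x₁, x₂ are conjugates of t
  have hxroot : ∀ (z : ℂ), Polynomial.aeval z (minpoly ℚ τ) = 0 → z ≠ 0 →
      z⁻¹ = (starRingEnd ℂ) z → Polynomial.aeval ((z + (starRingEnd ℂ) z)) Q = 0 := by
    intro z hz hz0 hzc
    obtain ⟨σ, hσ⟩ := exists_embedding K τK z (by rwa [hminτK])
    have hσt : σ tK = z + (starRingEnd ℂ) z := by
      rw [htKdef, map_add, map_inv₀, hσ, hzc]
    have := embed_root K σ Q tK haevaltKQ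
    rwa [hσt] at this
  have hx₁root : Polynomial.aeval ((x₁ : ℝ) : ℂ) Q = 0 := by
    have := hxroot z₁ h₁ hz₁ne hz₁c
    rwa [hcx₁] at this
  have hx₂root : Polynomial.aeval ((x₂ : ℝ) : ℂ) Q = 0 := by
    have := hxroot z₂ h₂ hz₂ne hz₂c
    rwa [hcx₂] at this
  -- classification of the roots of Q
  have hclass : ∀ y : ℂ, Polynomial.aeval y Q = 0 →
      y = tc ∨ ∃ yr : ℝ, y = (yr : ℂ) ∧ |yr| < 2 := by
    intro y hy
    obtain ⟨σ, hσ⟩ := exists_embedding K tK y (by rwa [hmintK])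
    set u : ℂ := σ τK with hudef
    have hu : Polynomial.aeval u (minpoly ℚ τ) = 0 := by
      have := embed_root K σ (minpoly ℚ τ) τK haevτc
      exact this
    have hyu : y = u + u⁻¹ := by
      rw [← hσ, htKdef, map_add, map_inv₀, hudef]
    have hune : u ≠ 0 := by
      intro h
      rw [h] at hyu
      simp at hyu
      -- y = 0 is a root of Q, but then aeval 0 ... contradiction with u=0 root of minpoly τ
      have : Polynomial.aeval (0:ℂ) (minpoly ℚ τ) = 0 := by rwa [h] at hu
      rw [Polynomial.aeval_def, Polynomial.eval₂_at_zero] at this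
      have hc0 : (minpoly ℚ τ).coeff 0 ≠ 0 := minpoly.coeff_zero_ne_zero hτalg hτne
      exact hc0 ((map_eq_zero_iff (algebraMap ℚ ℂ) (algebraMap ℚ ℂ).injective).mp this)
    by_cases huτ : u = τc
    · left; rw [hyu, huτ, htc]
    by_cases huτ' : u = τc⁻¹
    · left; rw [hyu, huτ', inv_inv, htc]; ring
    have huabs : ‖u‖ = 1 := habs u hu huτ huτ'
    have hrat : ∀ q : ℚ, y = ((q:ℝ) : ℂ) → t = (q:ℝ) := by
      intro q hq
      apply eq_of_rat_root htint
      rw [hq] at hy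
      rw [show (((q:ℝ)):ℂ) = algebraMap ℝ ℂ ((q:ℝ)) from rfl,
        Polynomial.aeval_algebraMap_apply] at hy
      have := (algebraMap ℝ ℂ).injective (by simpa using hy)
      simpa using this
    have hu1 : u ≠ 1 := by
      intro h
      have hy2 : y = (((2:ℚ):ℝ) : ℂ) := by rw [hyu, h]; norm_num
      have ht2' := hrat 2 hy2
      norm_num at ht2'
      linarith
    have hum1 : u ≠ -1 := by
      intro h
      have hy2 : y = (((-2:ℚ):ℝ) : ℂ) := by rw [hyu, h]; norm_num
      have ht2' := hrat (-2) hy2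
      norm_num at ht2'
      linarith
    right
    have huconj : u⁻¹ = (starRingEnd ℂ) u := Complex.inv_eq_conj (by assumption)
    refine ⟨2 * u.re, ?_, ?_⟩
    · rw [hyu, huconj, Complex.add_conj]
    · have hnsq : u.re^2 + u.im^2 = 1 := by
        have hq1 : Complex.normSq u = 1 := by rw [Complex.normSq_eq_norm_sq, huabs]; norm_num
        rw [Complex.normSq_apply] at hq1
        linear_combination hq1
      have hure : |u.re| < 1 := by
        rcases lt_or_eq_of_le (show u.re^2 ≤ 1 by nlinarith [sq_nonneg u.im]) with h | h
        · rw [abs_lt]; constructor <;> nlinarith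
        · exfalso
          have him : u.im = 0 := by nlinarith
          have hcases : (u.re - 1) * (u.re + 1) = 0 := by nlinarith
          rcases mul_eq_zero.mp hcases with h' | h'
          · apply hu1
            apply Complex.ext
            · simpa using (show u.re = 1 by linarith)
            · simpa using him
          · apply hum1
            apply Complex.ext
            · simpa using (show u.re = -1 by linarith)
            · simpa using him
      rw [abs_lt] at hure ⊢
      constructor <;> linarith [hure.1, hure.2]
  -- integrality of the generators
  have hz₁int : IsIntegral ℚ z₁ :=
    ⟨minpoly ℚ τ, minpoly.monic hτalg, by rw [← Polynomial.aeval_def]; exact h₁⟩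
  have hz₂int : IsIntegral ℚ z₂ :=
    ⟨minpoly ℚ τ, minpoly.monic hτalg, by rw [← Polynomial.aeval_def]; exact h₂⟩
  have hQirr : Irreducible Q := minpoly.irreducible htint
  have hQmon : Q.Monic := minpoly.monic htint
  have hcoeff0 : Q.coeff 0 ≠ 0 := minpoly.coeff_zero_ne_zero htint htne0
  have hzero_not_root : Polynomial.aeval ((0:ℝ):ℂ) Q ≠ 0 := by
    intro h0
    rw [Complex.ofReal_zero, Polynomial.aeval_def, Polynomial.eval₂_at_zero] at h0
    exact hcoeff0 ((map_eq_zero_iff (algebraMap ℚ ℂ) (algebraMap ℚ ℂ).injective).mp h0)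
  have htx₁ : tc ≠ ((x₁:ℝ):ℂ) := by
    rw [htcdef]
    intro h
    have : t = x₁ := by exact_mod_cast h
    have := (abs_lt.mp hx₁lt).2
    linarith
  have htx₂ : tc ≠ ((x₂:ℝ):ℂ) := by
    rw [htcdef]
    intro h
    have : t = x₂ := by exact_mod_cast h
    have := (abs_lt.mp hx₂lt).2
    linarith
  by_cases hex : ∃ y : ℂ, Polynomial.aeval y Q = 0 ∧ y ≠ tc ∧ y ≠ ((x₁:ℝ):ℂ) ∧ y ≠ ((x₂:ℝ):ℂ)
  · -- main case: a fourth root of Q exists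
    obtain ⟨y', hy'Q, hy'ne0, hy'ne1, hy'ne2⟩ := hex
    have hy'int : IsIntegral ℚ y' :=
      ⟨Q, hQmon, by rw [← Polynomial.aeval_def]; exact hy'Q⟩
    have hSfin : ({τc, z₁, z₂, y'} : Set ℂ).Finite := by
      exact (Set.finite_singleton y').insert z₂ |>.insert z₁ |>.insert τc
    haveI : Finite ↥({τc, z₁, z₂, y'} : Set ℂ) := hSfin.to_subtype
    set L : IntermediateField ℚ ℂ := IntermediateField.adjoin ℚ {τc, z₁, z₂, y'} with hLdef
    haveI : FiniteDimensional ℚ L := by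
      apply IntermediateField.finiteDimensional_adjoin
      intro x hx
      rcases hx with h | h | h | h
      · rw [h]; exact hτcint
      · rw [h]; exact hz₁int
      · rw [h]; exact hz₂int
      · rw [Set.mem_singleton_iff.mp h]; exact hy'int
    have hmτL : τc ∈ L := IntermediateField.subset_adjoin ℚ _ (by left; rfl)
    have hmz₁L : z₁ ∈ L := IntermediateField.subset_adjoin ℚ _ (by right; left; rfl)
    have hmz₂L : z₂ ∈ L := IntermediateField.subset_adjoin ℚ _ (by right; right; left; rfl)
    have hmy'L : y' ∈ L := IntermediateField.subset_adjoin ℚ _ (by right; right; right; rfl)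
    have hmtcL : tc ∈ L := by rw [htc]; exact add_mem hmτL (inv_mem hmτL)
    have hmx₁L : ((x₁:ℝ):ℂ) ∈ L := by
      rw [← hcx₁, ← hz₁c]; exact add_mem hmz₁L (inv_mem hmz₁L)
    have hmx₂L : ((x₂:ℝ):ℂ) ∈ L := by
      rw [← hcx₂, ← hz₂c]; exact add_mem hmz₂L (inv_mem hmz₂L)
    set TL : L := ⟨tc, hmtcL⟩ with hTLdef
    set X1L : L := ⟨((x₁:ℝ):ℂ), hmx₁L⟩ with hX1Ldef
    set X2L : L := ⟨((x₂:ℝ):ℂ), hmx₂L⟩ with hX2Ldef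
    set YL : L := ⟨y', hmy'L⟩ with hYLdef
    have hrelL : TL * (X1L + X2L) - X1L * X2L = (4:L) := by
      have hC : tc * (((x₁:ℝ):ℂ) + ((x₂:ℝ):ℂ)) - ((x₁:ℝ):ℂ) * ((x₂:ℝ):ℂ) = 4 := by
        rw [htcdef]; exact_mod_cast htrel
      apply Subtype.coe_injective
      push_cast
      exact hC
    have hminy' : minpoly ℚ ((YL:ℂ)) = Q :=
      (minpoly.eq_of_irreducible_of_monic hQirr hy'Q hQmon).symm
    obtain ⟨ρ, hρ⟩ := exists_embedding L YL tc (by rw [hminy']; exact haevaltcQ)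
    have haQ : Polynomial.aeval (ρ TL) Q = 0 := embed_root L ρ Q TL haevaltcQ
    have hbQ : Polynomial.aeval (ρ X1L) Q = 0 := embed_root L ρ Q X1L hx₁root
    have hcQ : Polynomial.aeval (ρ X2L) Q = 0 := embed_root L ρ Q X2L hx₂root
    have haneq : ρ TL ≠ tc := by
      intro h
      have h2 : TL = YL := ρ.injective (h.trans hρ.symm)
      exact hy'ne0 (congrArg Subtype.val h2).symm
    have hbneq : ρ X1L ≠ tc := by
      intro h
      have h2 : X1L = YL := ρ.injective (h.trans hρ.symm)
      exact hy'ne1 (congrArg Subtype.val h2).symm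
    have hcneq : ρ X2L ≠ tc := by
      intro h
      have h2 : X2L = YL := ρ.injective (h.trans hρ.symm)
      exact hy'ne2 (congrArg Subtype.val h2).symm
    rcases hclass _ haQ with h | ⟨ya, hya, hyalt⟩
    · exact haneq h
    rcases hclass _ hbQ with h | ⟨yb, hyb, hyblt⟩
    · exact hbneq h
    rcases hclass _ hcQ with h | ⟨yc, hyc, hyclt⟩
    · exact hcneq h
    have hrel2 : (ρ TL) * (ρ X1L + ρ X2L) - (ρ X1L) * (ρ X2L) = 4 := by
      have h := congrArg ρ hrelL
      simpa [map_sub, map_mul, map_add, map_ofNat] using h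
    rw [hya, hyb, hyc] at hrel2
    have hrelR : ya * (yb + yc) - yb * yc = 4 := by exact_mod_cast hrel2
    exact salem_ineq ya yb yc hyalt hyblt hyclt hrelR
  · -- degenerate case: the only roots of Q are tc, x₁, x₂
    push_neg at hex
    have hSfin : ({τc, z₁, z₂} : Set ℂ).Finite := by
      exact (Set.finite_singleton z₂).insert z₁ |>.insert τc
    haveI : Finite ↥({τc, z₁, z₂} : Set ℂ) := hSfin.to_subtype
    set L : IntermediateField ℚ ℂ := IntermediateField.adjoin ℚ {τc, z₁, z₂} with hLdef
    haveI : FiniteDimensional ℚ L := by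
      apply IntermediateField.finiteDimensional_adjoin
      intro x hx
      rcases hx with h | h | h
      · rw [h]; exact hτcint
      · rw [h]; exact hz₁int
      · rw [Set.mem_singleton_iff.mp h]; exact hz₂int
    have hmτL : τc ∈ L := IntermediateField.subset_adjoin ℚ _ (by left; rfl)
    have hmz₁L : z₁ ∈ L := IntermediateField.subset_adjoin ℚ _ (by right; left; rfl)
    have hmz₂L : z₂ ∈ L := IntermediateField.subset_adjoin ℚ _ (by right; right; rfl)
    have hmtcL : tc ∈ L := by rw [htc]; exact add_mem hmτL (inv_mem hmτL)
    have hmx₁L : ((x₁:ℝ):ℂ) ∈ L := by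
      rw [← hcx₁, ← hz₁c]; exact add_mem hmz₁L (inv_mem hmz₁L)
    have hmx₂L : ((x₂:ℝ):ℂ) ∈ L := by
      rw [← hcx₂, ← hz₂c]; exact add_mem hmz₂L (inv_mem hmz₂L)
    set TL : L := ⟨tc, hmtcL⟩ with hTLdef
    set X1L : L := ⟨((x₁:ℝ):ℂ), hmx₁L⟩ with hX1Ldef
    set X2L : L := ⟨((x₂:ℝ):ℂ), hmx₂L⟩ with hX2Ldef
    have hrelL : TL * (X1L + X2L) - X1L * X2L = (4:L) := by
      have hC : tc * (((x₁:ℝ):ℂ) + ((x₂:ℝ):ℂ)) - ((x₁:ℝ):ℂ) * ((x₂:ℝ):ℂ) = 4 := by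
        rw [htcdef]; exact_mod_cast htrel
      apply Subtype.coe_injective
      push_cast
      exact hC
    have hminX1 : minpoly ℚ ((X1L:ℂ)) = Q :=
      (minpoly.eq_of_irreducible_of_monic hQirr hx₁root hQmon).symm
    obtain ⟨ρ, hρ⟩ := exists_embedding L X1L tc (by rw [hminX1]; exact haevaltcQ)
    have haQ : Polynomial.aeval (ρ TL) Q = 0 := embed_root L ρ Q TL haevaltcQ
    have hcQ : Polynomial.aeval (ρ X2L) Q = 0 := embed_root L ρ Q X2L hx₂root
    have haneq : ρ TL ≠ tc := by
      intro h
      have h2 : TL = X1L := ρ.injective (h.trans hρ.symm)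
      exact htx₁ (congrArg Subtype.val h2)
    have hcneq : ρ X2L ≠ tc := by
      intro h
      have h2 : X2L = X1L := ρ.injective (h.trans hρ.symm)
      have h3 : ((x₂:ℝ):ℂ) = ((x₁:ℝ):ℂ) := congrArg Subtype.val h2
      have h4 : x₂ = x₁ := by exact_mod_cast h3
      exact hx12 h4.symm
    have hac : ρ TL ≠ ρ X2L := by
      intro h
      have h2 : TL = X2L := ρ.injective h
      exact htx₂ (congrArg Subtype.val h2)
    have hrel2 : (ρ TL) * (tc + ρ X2L) - tc * (ρ X2L) = 4 := by
      have h := congrArg ρ hrelL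
      simpa [map_sub, map_mul, map_add, map_ofNat, hρ] using h
    -- identify the images among {x₁, x₂}
    have hxzero : ∀ w : ℝ, Polynomial.aeval ((w:ℝ):ℂ) Q = 0 → w = 0 → False := by
      intro w hw hw0
      rw [hw0] at hw
      exact hzero_not_root hw
    by_cases hax1 : ρ TL = ((x₁:ℝ):ℂ)
    · have hcx2 : ρ X2L = ((x₂:ℝ):ℂ) := by
        by_cases h : ρ X2L = ((x₁:ℝ):ℂ)
        · exact absurd (hax1.trans h.symm) hac
        · exact hex _ hcQ hcneq h
      rw [hax1, hcx2, htcdef] at hrel2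
      have hA : x₁ * (t + x₂) - t * x₂ = 4 := by exact_mod_cast hrel2
      have h0 : x₂ * (x₁ - t) = 0 := by linear_combination (1/2 : ℝ) * hA - (1/2 : ℝ) * htrel
      rcases mul_eq_zero.mp h0 with h0 | h0
      · exact hxzero x₂ hx₂root h0
      · have := (abs_lt.mp hx₁lt).2
        linarith
    · have hax2 : ρ TL = ((x₂:ℝ):ℂ) := hex _ haQ haneq hax1
      have hcx1 : ρ X2L = ((x₁:ℝ):ℂ) := by
        by_cases h : ρ X2L = ((x₁:ℝ):ℂ)
        · exact h
        · have h' : ρ X2L = ((x₂:ℝ):ℂ) := hex _ hcQ hcneq h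
          exact absurd (hax2.trans h'.symm) hac
      rw [hax2, hcx1, htcdef] at hrel2
      have hA : x₂ * (t + x₁) - t * x₁ = 4 := by exact_mod_cast hrel2
      have h0 : x₁ * (x₂ - t) = 0 := by linear_combination (1/2 : ℝ) * hA - (1/2 : ℝ) * htrel
      rcases mul_eq_zero.mp h0 with h0 | h0
      · exact hxzero x₁ hx₁root h0
      · have := (abs_lt.mp hx₂lt).2
        linarith
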